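/- Let (E,Y_E,D) be a D-ertex algebra, let V = E ⊕ ℂ be the vertex algebra with products (u,a)_n (v,b) = (u_n v + b·c_n(u) + a·δ_{n,−1} v, a·b·δ_{n,−1}) and vacuum (0,1), and let i : E → V be i(u) = (u,0). Suppose F is a vertex algebra and j : E → F is an injective D-ertex algebra homomorphism (F regarded as a D-ertex algebra via 𝒟_F(v) = v_{−2} 1_F) such that for every vertex algebra W and every D-ertex algebra homomorphism ψ : E → W (W via 𝒟_W(v) = v_{−2} 1_W) there exists a unique vertex algebra homomorphism φ : F → W with φ ∘ j = ψ. Then there exists a unique vertex algebra isomorphism α : V → F such that α ∘ i = j. -/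

import Mathlib

noncomputable section
set_option maxRecDepth 8000

/-- Generalized binomial coefficient `m(m-1)⋯(m-i+1)/i!` in `ℚ`, for `m : ℤ`, `i : ℕ`. -/
def qbinom (m : ℤ) (i : ℕ) : ℚ :=
  (∏ j ∈ Finset.range i, ((m : ℚ) - (j : ℚ))) / (Nat.factorial i : ℚ)

/-- The data of bilinear products `uₙv` (for `n : ℤ`) on a `ℂ`-vector space `V` forms an
ertex algebra: bilinearity, truncation, and the Jacobi identity in Borcherds component form,
where the (finite by truncation) sums are formalized as `finsum`s. -/
structure IsErtex {V : Type} [AddCommGroup V] [Module ℂ V]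
    (mul : ℤ → V → V → V) : Prop where
  add_left : ∀ (n : ℤ) (u u' v : V), mul n (u + u') v = mul n u v + mul n u' v
  smul_left : ∀ (n : ℤ) (c : ℂ) (u v : V), mul n (c • u) v = c • mul n u v
  add_right : ∀ (n : ℤ) (u v v' : V), mul n u (v + v') = mul n u v + mul n u v'
  smul_right : ∀ (n : ℤ) (c : ℂ) (u v : V), mul n u (c • v) = c • mul n u v
  trunc : ∀ u v : V, ∃ N : ℤ, ∀ n : ℤ, N ≤ n → mul n u v = 0
  jacobi : ∀ (u v w : V) (p q r : ℤ),
    (∑ᶠ i : ℕ, (qbinom p i : ℂ) • mul (p + q - (i : ℤ)) (mul (r + (i : ℤ)) u v) w) =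
    ∑ᶠ i : ℕ, ((-1 : ℂ) ^ (i : ℕ) * (qbinom r i : ℂ)) •
      (mul (p + r - (i : ℤ)) u (mul (q + (i : ℤ)) v w)
        - ((-1 : ℂ) ^ r) • mul (q + r - (i : ℤ)) v (mul (p + (i : ℤ)) u w))

/-- A (bundled) ertex algebra. -/
structure ErtexAlgebra where
  carrier : Type
  [addCommGroup : AddCommGroup carrier]
  [module : Module ℂ carrier]
  mul : ℤ → carrier → carrier → carrier
  isErtex : IsErtex mul

attribute [instance] ErtexAlgebra.addCommGroup ErtexAlgebra.module

/-- An ertex algebra (given by its products) is injective if `uₙv = 0` for all `n, v`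
implies `u = 0`. -/
def ErtexInjectiveFun {V : Type} [AddCommGroup V] [Module ℂ V]
    (mul : ℤ → V → V → V) : Prop :=
  ∀ u : V, (∀ (n : ℤ) (v : V), mul n u v = 0) → u = 0

/-- `f` intertwines the products `mulV` and `mulW` (ertex algebra homomorphism property). -/
def IsMulHomFun {V W : Type} [AddCommGroup V] [Module ℂ V] [AddCommGroup W] [Module ℂ W]
    (mulV : ℤ → V → V → V) (mulW : ℤ → W → W → W) (f : V →ₗ[ℂ] W) : Prop :=
  ∀ (n : ℤ) (u v : V), f (mulV n u v) = mulW n (f u) (f v)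

/-- Vacuum and creation properties for the vector `one`. -/
structure IsVacuum {V : Type} [AddCommGroup V] [Module ℂ V]
    (mul : ℤ → V → V → V) (one : V) : Prop where
  vac_minus_one : ∀ v : V, mul (-1) one v = v
  vac_ne : ∀ n : ℤ, n ≠ -1 → ∀ v : V, mul n one v = 0
  create_minus_one : ∀ u : V, mul (-1) u one = u
  create_nonneg : ∀ n : ℤ, 0 ≤ n → ∀ u : V, mul n u one = 0

/-- A (bundled) vertex algebra: an ertex algebra with a vacuum vector. -/
structure VertexAlgebra extends ErtexAlgebra where
  vac : carrier
  isVacuum : IsVacuum mul vac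

/-- The `D`-derivative property: `(Du)ₙ v = -n · u_{n-1} v`. -/
def IsDDeriv {V : Type} [AddCommGroup V] [Module ℂ V]
    (mul : ℤ → V → V → V) (D : V → V) : Prop :=
  ∀ (n : ℤ) (u v : V), mul n (D u) v = ((-n : ℤ) : ℂ) • mul (n - 1) u v

/-- The `D`-bracket derivative formula: `D(uₙv) = (Du)ₙv + uₙ(Dv)`. -/
def IsDBracket {V : Type} [AddCommGroup V] [Module ℂ V]
    (mul : ℤ → V → V → V) (D : V → V) : Prop :=
  ∀ (n : ℤ) (u v : V), D (mul n u v) = mul n (D u) v + mul n u (D v)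

/-- Skew-symmetry: `uₙv = ∑_{i≥0} (-1)^{n+1+i} (1/i!) Dⁱ(v_{n+i}u)` (sum finite by
truncation, formalized as a `finsum`). -/
def IsSkew {V : Type} [AddCommGroup V] [Module ℂ V]
    (mul : ℤ → V → V → V) (D : V → V) : Prop :=
  ∀ (n : ℤ) (u v : V), mul n u v =
    ∑ᶠ i : ℕ, ((-1 : ℂ) ^ (n + 1 + (i : ℤ)) * ((Nat.factorial i : ℂ))⁻¹) •
      D^[i] (mul (n + (i : ℤ)) v u)

/-- The three defining properties of a `D`-ertex algebra structure. -/
def IsDStructure {V : Type} [AddCommGroup V] [Module ℂ V]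
    (mul : ℤ → V → V → V) (D : V → V) : Prop :=
  IsDDeriv mul D ∧ IsDBracket mul D ∧ IsSkew mul D

/-- A (bundled) `D`-ertex algebra. -/
structure DErtexAlgebra extends ErtexAlgebra where
  D : carrier →ₗ[ℂ] carrier
  isD : IsDStructure mul ⇑D

/-- `cₙ(u) = (1/(-n-1)!) D^{-n-1} u` for `n ≤ -1`, and `0` for `n ≥ 0`. -/
def DErtexAlgebra.cfun (E : DErtexAlgebra) (n : ℤ) (u : E.carrier) : E.carrier :=
  if n ≤ -1 then ((Nat.factorial (-n - 1).toNat : ℂ))⁻¹ • (⇑E.D)^[(-n - 1).toNat] u else 0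

/-- The products on `E ⊕ ℂ`:
`(u,a)ₙ(v,b) = (uₙv + b·cₙ(u) + a·δ_{n,-1}·v, a·b·δ_{n,-1})`. -/
def DErtexAlgebra.extMul (E : DErtexAlgebra) :
    ℤ → E.carrier × ℂ → E.carrier × ℂ → E.carrier × ℂ :=
  fun n p q =>
    (E.mul n p.1 q.1 + q.2 • E.cfun n p.1 + (if n = -1 then p.2 • q.1 else 0),
      if n = -1 then p.2 * q.2 else 0)

/-- The adjoined vacuum vector `1 = (0,1)` in `E ⊕ ℂ`. -/
def DErtexAlgebra.extVac (E : DErtexAlgebra) : E.carrier × ℂ := (0, 1)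

/-- The linear span of `{Dⁿ(ψ u) : n ≥ 0, u ∈ E}` inside a `D`-ertex algebra. -/
def DSpan (E : ErtexAlgebra) (F : DErtexAlgebra) (ψ : E.carrier →ₗ[ℂ] F.carrier) :
    Submodule ℂ F.carrier :=
  Submodule.span ℂ {x | ∃ (n : ℕ) (u : E.carrier), x = (⇑F.D)^[n] (ψ u)}

/-- `ψ : E → F` is a `D`-injective ertex algebra homomorphism into the `D`-ertex algebra
`F`: it is an ertex homomorphism and the span of `{Dⁿ(ψ u)}` is an injective ertex algebra. -/
def IsDInjectiveHom (E : ErtexAlgebra) (F : DErtexAlgebra)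
    (ψ : E.carrier →ₗ[ℂ] F.carrier) : Prop :=
  IsMulHomFun E.mul F.mul ψ ∧
    ∀ w : F.carrier, w ∈ DSpan E F ψ →
      (∀ n : ℤ, ∀ v ∈ DSpan E F ψ, F.mul n w v = 0) → w = 0

/-- The linear span of `{𝒟ⁿ(ψ u) : n ≥ 0, u ∈ E}` inside a vertex algebra, where
`𝒟(v) = v₋₂1` is the derivative operator. -/
def VDSpan (E : ErtexAlgebra) (W : VertexAlgebra) (ψ : E.carrier →ₗ[ℂ] W.carrier) :
    Submodule ℂ W.carrier :=
  Submodule.span ℂ {x | ∃ (n : ℕ) (u : E.carrier), x = (fun v => W.mul (-2) v W.vac)^[n] (ψ u)}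

/-- `ψ : E → W` is a `D`-injective ertex algebra homomorphism into the vertex algebra `W`
regarded as a `D`-ertex algebra via `𝒟(v) = v₋₂1`. -/
def IsVDInjectiveHom (E : ErtexAlgebra) (W : VertexAlgebra)
    (ψ : E.carrier →ₗ[ℂ] W.carrier) : Prop :=
  IsMulHomFun E.mul W.mul ψ ∧
    ∀ w : W.carrier, w ∈ VDSpan E W ψ →
      (∀ n : ℤ, ∀ v ∈ VDSpan E W ψ, W.mul n w v = 0) → w = 0



/- ===== auxiliary development ===== -/

section QB

lemma qbinom_zero (m : ℤ) : qbinom m 0 = 1 := by simp [qbinom]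

lemma qbinom_one (m : ℤ) : qbinom m 1 = m := by simp [qbinom]

lemma qbinom_nat (n k : ℕ) : qbinom (n:ℤ) k = (n.choose k : ℚ) := by
  by_cases h : k ≤ n
  · have hprod : (∏ j ∈ Finset.range k, (((n:ℤ):ℚ) - (j:ℚ))) = (n.descFactorial k : ℚ) := by
      rw [Nat.descFactorial_eq_prod_range, Nat.cast_prod]
      apply Finset.prod_congr rfl
      intro j hj
      have hj' : j ≤ n := le_trans (le_of_lt (Finset.mem_range.mp hj)) h
      push_cast [Nat.cast_sub hj']
      ring
    rw [qbinom, hprod, Nat.descFactorial_eq_factorial_mul_choose]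
    push_cast
    rw [mul_comm, mul_div_assoc, div_self (by exact_mod_cast Nat.factorial_ne_zero k), mul_one]
  · push_neg at h
    rw [Nat.choose_eq_zero_of_lt h, Nat.cast_zero, qbinom,
      Finset.prod_eq_zero (Finset.mem_range.mpr h : n ∈ Finset.range k)]
    · simp
    · push_cast; ring

lemma qbinom_zero_left {k : ℕ} (hk : k ≠ 0) : qbinom 0 k = 0 := by
  have := qbinom_nat 0 k
  simpa [Nat.choose_eq_zero_of_lt (Nat.pos_of_ne_zero hk)] using this

lemma qbinom_eq_zero_of_lt {n k : ℕ} (h : n < k) : qbinom (n:ℤ) k = 0 := by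
  rw [qbinom_nat, Nat.choose_eq_zero_of_lt h, Nat.cast_zero]

lemma qbinom_symm {n i j : ℕ} (h : i + j = n) : qbinom (n:ℤ) i = qbinom (n:ℤ) j := by
  rw [qbinom_nat, qbinom_nat, Nat.choose_symm_of_eq_add h.symm]

lemma qbinom_reflect (m : ℤ) (k : ℕ) : qbinom ((k:ℤ) - m - 1) k = (-1)^k * qbinom m k := by
  unfold qbinom
  rw [← mul_div_assoc]
  congr 1
  have hr := Finset.prod_range_reflect (fun j => ((((k:ℤ) - m - 1 : ℤ)):ℚ) - ((j:ℕ):ℚ)) k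
  rw [← hr]
  have : ∀ j ∈ Finset.range k,
      ((((k:ℤ) - m - 1 : ℤ)):ℚ) - ((k - 1 - j : ℕ):ℚ) = -(((m:ℚ)) - (j:ℚ)) := by
    intro j hj
    have hj' : j < k := Finset.mem_range.mp hj
    have h1 : (1:ℕ) ≤ k := Nat.one_le_iff_ne_zero.mpr (by omega)
    have h2 : j ≤ k - 1 := by omega
    have : ((k - 1 - j : ℕ):ℚ) = (k:ℚ) - 1 - (j:ℚ) := by
      push_cast [Nat.cast_sub h2, Nat.cast_sub h1]
      ring
    rw [this]
    push_cast
    ring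
  rw [Finset.prod_congr rfl this]
  have h2 : ∀ j ∈ Finset.range k, -((m:ℚ) - (j:ℚ)) = (-1) * ((m:ℚ) - (j:ℚ)) :=
    fun j _ => by ring
  rw [Finset.prod_congr rfl h2, Finset.prod_mul_distrib, Finset.prod_const, Finset.card_range]

/-- `(-1)^k * qbinom r k = qbinom (k - r - 1) k` rearranged. -/
lemma neg_one_pow_mul_qbinom (r : ℤ) (k : ℕ) :
    (-1:ℚ)^k * qbinom r k = qbinom ((k:ℤ) - r - 1) k := by
  rw [qbinom_reflect]

lemma neg_one_pow_sq (k : ℕ) : ((-1:ℂ))^k * ((-1:ℂ))^k = 1 := by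
  rw [← mul_pow]; norm_num

lemma neg_one_zpow_sq (r : ℤ) : ((-1:ℂ))^r * ((-1:ℂ))^r = 1 := by
  rw [← zpow_add₀ (by norm_num : (-1:ℂ) ≠ 0)]
  have : Even (r + r) := ⟨r, rfl⟩
  exact this.neg_one_zpow

lemma neg_one_zpow_natCast (k : ℕ) : ((-1:ℂ))^((k:ℤ)) = ((-1:ℂ))^k := zpow_natCast _ _

/-- If `k + l = r` then `(-1)^r = (-1)^k * (-1)^l`. -/
lemma neg_one_zpow_split {k l : ℕ} {r : ℤ} (h : (k:ℤ) + (l:ℤ) = r) :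
    ((-1:ℂ))^r = ((-1:ℂ))^k * ((-1:ℂ))^l := by
  rw [← h, zpow_add₀ (by norm_num : (-1:ℂ) ≠ 0), neg_one_zpow_natCast, neg_one_zpow_natCast]

/-- If `k + r = -1` then `(-1)^k = -(-1)^r`. -/
lemma neg_one_pow_eq_neg_zpow {k : ℕ} {r : ℤ} (h : (k:ℤ) + r = -1) :
    ((-1:ℂ))^k = -((-1:ℂ))^r := by
  have h1 : ((-1:ℂ))^((k:ℤ)) * ((-1:ℂ))^r = ((-1:ℂ))^((k:ℤ) + r) :=
    (zpow_add₀ (by norm_num : (-1:ℂ) ≠ 0) _ _).symm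
  rw [h] at h1
  have h2 : ((-1:ℂ))^((-1:ℤ)) = -1 := by norm_num
  rw [h2, neg_one_zpow_natCast] at h1
  have := congrArg (· * ((-1:ℂ))^r) h1
  simp only [mul_assoc, neg_one_zpow_sq r] at this
  simpa [neg_eq_iff_eq_neg] using this

end QB

lemma qbinom_symm' {p : ℤ} (hp : 0 ≤ p) {i j : ℕ} (h : (i:ℤ) + (j:ℤ) = p) :
    qbinom p i = qbinom p j := by
  have hp' : p = ((p.toNat:ℕ):ℤ) := by omega
  rw [hp']; exact qbinom_symm (by omega)

lemma qbinom_eq_zero' {p : ℤ} (hp : 0 ≤ p) {k : ℕ} (h : p < (k:ℤ)) : qbinom p k = 0 := by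
  have hp' : p = ((p.toNat:ℕ):ℤ) := by omega
  rw [hp']; exact qbinom_eq_zero_of_lt (by omega)

lemma finsum_if_eq {M : Type} [AddCommMonoid M] (t : ℤ) (f : ℕ → M) :
    (∑ᶠ i : ℕ, if (i:ℤ) = t then f i else 0) = if 0 ≤ t then f t.toNat else 0 := by
  by_cases ht : 0 ≤ t
  · rw [if_pos ht, finsum_eq_single _ t.toNat, if_pos (by omega : ((t.toNat:ℕ):ℤ) = t)]
    intro i hi
    rw [if_neg (by omega)]
  · rw [if_neg ht, finsum_eq_zero_of_forall_eq_zero]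
    intro i; rw [if_neg (by omega)]

lemma triv_coeff (p q r : ℤ) (hs : p + q + r = -2) :
    (if 0 ≤ p+q+1 then ((qbinom p (p+q+1).toNat : ℚ) : ℂ) else 0)
      = (if 0 ≤ -1-q then ((-1:ℂ))^(-1-q).toNat * ((qbinom r (-1-q).toNat : ℚ):ℂ) else 0)
        - (if 0 ≤ -1-p then
            ((-1:ℂ))^(-1-p).toNat * ((qbinom r (-1-p).toNat : ℚ):ℂ) * ((-1:ℂ))^r else 0) := by
  by_cases hp : 0 ≤ p <;> by_cases hq : 0 ≤ q
  · -- both nonneg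
    rw [if_pos (show (0:ℤ) ≤ p+q+1 by omega), if_neg (show ¬(0:ℤ) ≤ -1-q by omega),
      if_neg (show ¬(0:ℤ) ≤ -1-p by omega), sub_zero, qbinom_eq_zero' hp (by omega)]
    norm_num
  · -- 0 ≤ p, q ≤ -1
    rw [if_neg (show ¬(0:ℤ) ≤ -1-p by omega), sub_zero,
      if_pos (show (0:ℤ) ≤ -1-q by omega)]
    set k₁ := (-1-q).toNat with hk₁def
    have hk₁ : (k₁:ℤ) = -1-q := by omega
    have hq1 : (-1:ℚ)^k₁ * qbinom r k₁ = qbinom p k₁ := by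
      rw [neg_one_pow_mul_qbinom]; congr 1; omega
    have hq1' : ((-1:ℂ))^k₁ * ((qbinom r k₁:ℚ):ℂ) = ((qbinom p k₁:ℚ):ℂ) := by
      exact_mod_cast congrArg (fun x : ℚ => (x:ℂ)) hq1
    rw [hq1']
    by_cases hA : 0 ≤ p+q+1
    · rw [if_pos hA]
      exact_mod_cast congrArg (fun x : ℚ => (x:ℂ)) (qbinom_symm' hp (by omega))
    · rw [if_neg hA, qbinom_eq_zero' hp (by omega : p < (k₁:ℤ))]
      norm_num
  · -- p ≤ -1, 0 ≤ q
    rw [if_neg (show ¬(0:ℤ) ≤ -1-q by omega), zero_sub,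
      if_pos (show (0:ℤ) ≤ -1-p by omega)]
    set k₂ := (-1-p).toNat with hk₂def
    have hk₂ : (k₂:ℤ) = -1-p := by omega
    have hq2 : (-1:ℚ)^k₂ * qbinom r k₂ = qbinom q k₂ := by
      rw [neg_one_pow_mul_qbinom]; congr 1; omega
    have hq2' : ((-1:ℂ))^k₂ * ((qbinom r k₂:ℚ):ℂ) = ((qbinom q k₂:ℚ):ℂ) := by
      exact_mod_cast congrArg (fun x : ℚ => (x:ℂ)) hq2
    rw [hq2']
    by_cases hA : 0 ≤ p+q+1
    · rw [if_pos hA]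
      set k := (p+q+1).toNat with hkdef
      have hk : (k:ℤ) = p+q+1 := by omega
      have e1 : (-1:ℚ)^k * qbinom p k = qbinom q k := by
        rw [neg_one_pow_mul_qbinom]; congr 1; omega
      have e2 : qbinom p k = (-1:ℚ)^k * qbinom q k := by
        have h2 := congrArg (fun x => (-1:ℚ)^k * x) e1
        simp only [← mul_assoc, ← mul_pow] at h2
        norm_num at h2
        rw [← h2]
      have e2' : ((qbinom p k:ℚ):ℂ) = ((-1:ℂ))^k * ((qbinom q k:ℚ):ℂ) := by
        exact_mod_cast congrArg (fun x : ℚ => (x:ℂ)) e2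
      have e3 : qbinom q k = qbinom q k₂ := qbinom_symm' hq (by omega)
      have e3' : ((qbinom q k:ℚ):ℂ) = ((qbinom q k₂:ℚ):ℂ) := by exact_mod_cast e3
      have hsign : ((-1:ℂ))^k = -((-1:ℂ))^r := neg_one_pow_eq_neg_zpow (by omega)
      rw [e2', e3', hsign]
      ring
    · rw [if_neg hA, qbinom_eq_zero' hq (by omega : q < (k₂:ℤ))]
      norm_num
  · -- p ≤ -1, q ≤ -1
    rw [if_neg (show ¬(0:ℤ) ≤ p+q+1 by omega), if_pos (show (0:ℤ) ≤ -1-q by omega),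
      if_pos (show (0:ℤ) ≤ -1-p by omega)]
    set k₁ := (-1-q).toNat with hk₁def
    set k₂ := (-1-p).toNat with hk₂def
    have hk₁ : (k₁:ℤ) = -1-q := by omega
    have hk₂ : (k₂:ℤ) = -1-p := by omega
    have hr : 0 ≤ r := by omega
    have e1 : qbinom r k₁ = qbinom r k₂ := qbinom_symm' hr (by omega)
    have e1' : ((qbinom r k₁:ℚ):ℂ) = ((qbinom r k₂:ℚ):ℂ) := by exact_mod_cast e1
    have hsign : ((-1:ℂ))^r = ((-1:ℂ))^k₁ * ((-1:ℂ))^k₂ := neg_one_zpow_split (by omega)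
    rw [e1', hsign]
    have := neg_one_pow_sq k₂
    symm
    calc ((-1:ℂ))^k₁ * ((qbinom r k₂:ℚ):ℂ)
          - ((-1:ℂ))^k₂ * ((qbinom r k₂:ℚ):ℂ) * (((-1:ℂ))^k₁ * ((-1:ℂ))^k₂)
        = ((-1:ℂ))^k₁ * ((qbinom r k₂:ℚ):ℂ) * (1 - (((-1:ℂ))^k₂ * ((-1:ℂ))^k₂)) := by ring
      _ = 0 := by rw [this]; ring

lemma triv_jacobi (u v w : ℂ) (p q r : ℤ) :
    (∑ᶠ i : ℕ, (qbinom p i : ℂ) •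
      (if p + q - (i:ℤ) = -1 then (if r + (i:ℤ) = -1 then u * v else 0) * w else 0)) =
    ∑ᶠ i : ℕ, ((-1 : ℂ) ^ (i : ℕ) * (qbinom r i : ℂ)) •
      ((if p + r - (i:ℤ) = -1 then u * (if q + (i:ℤ) = -1 then v * w else 0) else 0)
        - ((-1 : ℂ) ^ r) •
          (if q + r - (i:ℤ) = -1 then v * (if p + (i:ℤ) = -1 then u * w else 0) else 0)) := by
  by_cases hs : p + q + r = -2
  · have hL : ∀ i : ℕ, (qbinom p i : ℂ) •
        (if p + q - (i:ℤ) = -1 then (if r + (i:ℤ) = -1 then u * v else 0) * w else 0)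
        = (if (i:ℤ) = p+q+1 then ((qbinom p i : ℚ):ℂ) * (u*v*w) else 0) := by
      intro i
      rcases eq_or_ne ((i:ℤ)) (p+q+1) with h|h
      · rw [if_pos h, if_pos (by omega), if_pos (by omega), smul_eq_mul]
      · rw [if_neg h, if_neg (by omega), smul_zero]
    have hR : ∀ i : ℕ, ((-1 : ℂ) ^ (i : ℕ) * (qbinom r i : ℂ)) •
        ((if p + r - (i:ℤ) = -1 then u * (if q + (i:ℤ) = -1 then v * w else 0) else 0)
          - ((-1 : ℂ) ^ r) •
            (if q + r - (i:ℤ) = -1 then v * (if p + (i:ℤ) = -1 then u * w else 0) else 0))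
        = (if (i:ℤ) = -1-q then ((-1:ℂ))^i * ((qbinom r i : ℚ):ℂ) * (u*v*w) else 0)
          - (if (i:ℤ) = -1-p then
              ((-1:ℂ))^i * ((qbinom r i : ℚ):ℂ) * ((-1:ℂ))^r * (u*v*w) else 0) := by
      intro i
      have e1 : (if p + r - (i:ℤ) = -1 then u * (if q + (i:ℤ) = -1 then v * w else 0) else 0)
          = (if (i:ℤ) = -1-q then u*v*w else 0) := by
        rcases eq_or_ne ((i:ℤ)) (-1-q) with h|h
        · rw [if_pos h, if_pos (by omega), if_pos (by omega), mul_assoc]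
        · rw [if_neg h]
          rcases eq_or_ne (p + r - (i:ℤ)) (-1) with h'|h'
          · rw [if_pos h', if_neg (by omega), mul_zero]
          · rw [if_neg h']
      have e2 : (if q + r - (i:ℤ) = -1 then v * (if p + (i:ℤ) = -1 then u * w else 0) else 0)
          = (if (i:ℤ) = -1-p then v*(u*w) else 0) := by
        rcases eq_or_ne ((i:ℤ)) (-1-p) with h|h
        · rw [if_pos h, if_pos (by omega), if_pos (by omega)]
        · rw [if_neg h]
          rcases eq_or_ne (q + r - (i:ℤ)) (-1) with h'|h'
          · rw [if_pos h', if_neg (by omega), mul_zero]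
          · rw [if_neg h']
      rw [e1, e2]
      split_ifs with h1 h2 h2 <;> simp only [smul_eq_mul, smul_zero, mul_zero, sub_zero,
        zero_sub, mul_sub] <;> ring
    rw [finsum_congr hL, finsum_congr hR, finsum_if_eq]
    have fin1 : (Function.support fun i : ℕ =>
        (if (i:ℤ) = -1-q then ((-1:ℂ))^i * ((qbinom r i : ℚ):ℂ) * (u*v*w) else 0)).Finite := by
      apply Set.Finite.subset (Set.finite_singleton (-1-q).toNat)
      intro i hi
      simp only [Function.mem_support] at hi
      have : (i:ℤ) = -1-q := by by_contra hc; exact hi (if_neg hc)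
      simp only [Set.mem_singleton_iff]; omega
    have fin2 : (Function.support fun i : ℕ =>
        (if (i:ℤ) = -1-p then
          ((-1:ℂ))^i * ((qbinom r i : ℚ):ℂ) * ((-1:ℂ))^r * (u*v*w) else 0)).Finite := by
      apply Set.Finite.subset (Set.finite_singleton (-1-p).toNat)
      intro i hi
      simp only [Function.mem_support] at hi
      have : (i:ℤ) = -1-p := by by_contra hc; exact hi (if_neg hc)
      simp only [Set.mem_singleton_iff]; omega
    rw [finsum_sub_distrib fin1 fin2, finsum_if_eq, finsum_if_eq]
    have hc := congrArg (fun x => x * (u*v*w)) (triv_coeff p q r hs)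
    simp only [sub_mul, ite_mul, zero_mul] at hc
    convert hc using 3 <;> ring
  · rw [finsum_eq_zero_of_forall_eq_zero, finsum_eq_zero_of_forall_eq_zero]
    · intro i
      have e1 : (if p + r - (i:ℤ) = -1 then u * (if q + (i:ℤ) = -1 then v * w else 0) else 0)
          = 0 := by
        rcases eq_or_ne (p + r - (i:ℤ)) (-1) with h|h
        · rw [if_pos h, if_neg (by omega), mul_zero]
        · rw [if_neg h]
      have e2 : (if q + r - (i:ℤ) = -1 then v * (if p + (i:ℤ) = -1 then u * w else 0) else 0)
          = 0 := by
        rcases eq_or_ne (q + r - (i:ℤ)) (-1) with h|h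
        · rw [if_pos h, if_neg (by omega), mul_zero]
        · rw [if_neg h]
      rw [e1, e2, smul_zero, sub_zero, smul_zero]
    · intro i
      rcases eq_or_ne (p + q - (i:ℤ)) (-1) with h|h
      · rw [if_pos h, if_neg (by omega), zero_mul, smul_zero]
      · rw [if_neg h, smul_zero]


section ErtexBasics

variable {V : Type} [AddCommGroup V] [Module ℂ V] {mul : ℤ → V → V → V}

lemma IsErtex.zero_left (h : IsErtex mul) (n : ℤ) (v : V) : mul n 0 v = 0 := by
  have := h.smul_left n 0 0 v; simpa using this

lemma IsErtex.zero_right (h : IsErtex mul) (n : ℤ) (u : V) : mul n u 0 = 0 := by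
  have := h.smul_right n 0 u 0; simpa using this

lemma IsErtex.suppL (h : IsErtex mul) (u v w : V) (p q r : ℤ) :
    (Function.support fun i : ℕ =>
      (qbinom p i : ℂ) • mul (p + q - (i:ℤ)) (mul (r + (i:ℤ)) u v) w).Finite := by
  obtain ⟨N, hN⟩ := h.trunc u v
  apply Set.Finite.subset (Set.finite_Iio (N - r).toNat)
  intro i hi
  simp only [Function.mem_support] at hi
  by_contra hcon
  simp only [Set.mem_Iio, not_lt] at hcon
  exact hi (by rw [hN (r + (i:ℤ)) (by omega), h.zero_left, smul_zero])

lemma IsErtex.suppR (h : IsErtex mul) (u v w : V) (p q r : ℤ) :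
    (Function.support fun i : ℕ =>
      ((-1 : ℂ) ^ (i : ℕ) * (qbinom r i : ℂ)) •
        (mul (p + r - (i:ℤ)) u (mul (q + (i:ℤ)) v w)
          - ((-1 : ℂ) ^ r) • mul (q + r - (i:ℤ)) v (mul (p + (i:ℤ)) u w))).Finite := by
  obtain ⟨N1, hN1⟩ := h.trunc v w
  obtain ⟨N2, hN2⟩ := h.trunc u w
  apply Set.Finite.subset (Set.finite_Iio (max (N1 - q).toNat (N2 - p).toNat))
  intro i hi
  simp only [Function.mem_support] at hi
  by_contra hcon
  simp only [Set.mem_Iio, not_lt, le_max_iff] at hcon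
  have h1 : N1 ≤ q + (i:ℤ) := by omega
  have h2 : N2 ≤ p + (i:ℤ) := by omega
  exact hi (by rw [hN1 _ h1, hN2 _ h2, h.zero_right, h.zero_right, smul_zero, sub_zero,
    smul_zero])

end ErtexBasics

/-- The one-dimensional trivial vertex algebra on `ℂ`. -/
def trivVA : VertexAlgebra where
  carrier := ℂ
  mul := fun n a b => if n = -1 then a * b else 0
  isErtex :=
    { add_left := fun n u u' v => by split <;> simp [add_mul]
      smul_left := fun n c u v => by split <;> simp [smul_eq_mul] <;> ring
      add_right := fun n u v v' => by split <;> simp [mul_add]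
      smul_right := fun n c u v => by split <;> simp [smul_eq_mul] <;> ring
      trunc := fun u v => ⟨0, fun n hn => if_neg (by omega)⟩
      jacobi := fun u v w p q r => triv_jacobi u v w p q r }
  vac := 1
  isVacuum :=
    { vac_minus_one := fun v => by simp
      vac_ne := fun n hn v => if_neg hn
      create_minus_one := fun u => by simp
      create_nonneg := fun n hn u => if_neg (by omega) }

section VAFacts

variable (V : VertexAlgebra)

lemma VA_Dm1 (x : V.carrier) (m : ℤ) :
    V.mul (-2) (V.mul m x V.vac) V.vac = ((-m : ℤ) : ℂ) • V.mul (m - 1) x V.vac := by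
  have hJ := V.isErtex.jacobi x V.vac V.vac 0 (-2) m
  have hL : (∑ᶠ i : ℕ, (qbinom 0 i : ℂ) •
      V.mul (0 + -2 - (i:ℤ)) (V.mul (m + (i:ℤ)) x V.vac) V.vac)
      = V.mul (-2) (V.mul m x V.vac) V.vac := by
    rw [finsum_eq_single _ 0]
    · norm_num [qbinom_zero]
    · intro i hi
      rw [show ((qbinom 0 i : ℚ) : ℂ) = 0 by exact_mod_cast qbinom_zero_left hi, zero_smul]
  have hR : (∑ᶠ i : ℕ, ((-1 : ℂ) ^ (i : ℕ) * (qbinom m i : ℂ)) •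
      (V.mul (0 + m - (i:ℤ)) x (V.mul (-2 + (i:ℤ)) V.vac V.vac)
        - ((-1 : ℂ) ^ m) • V.mul (-2 + m - (i:ℤ)) V.vac (V.mul (0 + (i:ℤ)) x V.vac)))
      = ((-m : ℤ) : ℂ) • V.mul (m - 1) x V.vac := by
    rw [finsum_eq_single _ 1]
    · rw [show (-2 + ((1:ℕ):ℤ)) = -1 by norm_num, V.isVacuum.vac_minus_one,
        V.isVacuum.create_nonneg (0 + ((1:ℕ):ℤ)) (by norm_num), V.isErtex.zero_right,
        smul_zero, sub_zero, show (0 + m - ((1:ℕ):ℤ)) = m - 1 by ring]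
      rw [qbinom_one]
      push_cast
      rw [pow_one]
      ring_nf
    · intro i hi
      rw [V.isVacuum.vac_ne (-2 + (i:ℤ)) (by omega), V.isErtex.zero_right,
        V.isVacuum.create_nonneg (0 + (i:ℤ)) (by omega), V.isErtex.zero_right,
        smul_zero, sub_zero, smul_zero]
  rw [hL, hR] at hJ
  exact hJ

lemma VA_Dpow (x : V.carrier) (k : ℕ) :
    (fun y => V.mul (-2) y V.vac)^[k] x
      = ((Nat.factorial k : ℂ)) • V.mul (-(k:ℤ) - 1) x V.vac := by
  induction k with
  | zero => simp [V.isVacuum.create_minus_one]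
  | succ k ih =>
    rw [Function.iterate_succ_apply', ih]
    rw [V.isErtex.smul_left, VA_Dm1, smul_smul]
    rw [show (-(-(k:ℤ) - 1) : ℤ) = (k:ℤ) + 1 by ring]
    rw [show (-(k:ℤ) - 1 - 1 : ℤ) = -((k:ℤ)+1) - 1 by ring]
    congr 1
    push_cast [Nat.factorial_succ]
    ring
  
end VAFacts

/-- Coercion out of a finsum of submodule elements. -/
lemma Submodule.val_finsum {M : Type} [AddCommGroup M] [Module ℂ M] (S : Submodule ℂ M)
    (f : ℕ → S) (hf : (Function.support fun i => ((f i : M))).Finite) :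
    ((∑ᶠ i, f i : S) : M) = ∑ᶠ i, (f i : M) := by
  have hf' : (Function.support f).Finite := by
    apply hf.subset
    intro i hi
    simp only [Function.mem_support] at hi ⊢
    intro hc
    exact hi (Subtype.ext (by simpa using hc))
  exact AddMonoidHom.map_finsum S.subtype.toAddMonoidHom hf'

/-- Sub-vertex-algebra on a submodule closed under the products and containing the vacuum. -/
def SubVA (V : VertexAlgebra) (S : Submodule ℂ V.carrier)
    (hmul : ∀ (n : ℤ) (x y : V.carrier), x ∈ S → y ∈ S → V.mul n x y ∈ S)
    (hvac : V.vac ∈ S) : VertexAlgebra where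
  carrier := ↥S
  mul := fun n x y => ⟨V.mul n x.1 y.1, hmul n x.1 y.1 x.2 y.2⟩
  isErtex :=
    { add_left := fun n u u' v => Subtype.ext (by exact V.isErtex.add_left n u.1 u'.1 v.1)
      smul_left := fun n c u v => Subtype.ext (by exact V.isErtex.smul_left n c u.1 v.1)
      add_right := fun n u v v' => Subtype.ext (by exact V.isErtex.add_right n u.1 v.1 v'.1)
      smul_right := fun n c u v => Subtype.ext (by exact V.isErtex.smul_right n c u.1 v.1)
      trunc := fun u v => by
        obtain ⟨N, hN⟩ := V.isErtex.trunc u.1 v.1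
        exact ⟨N, fun n hn => Subtype.ext (hN n hn)⟩
      jacobi := by
        intro u v w p q r
        rw [Subtype.ext_iff]
        have hfL := V.isErtex.suppL u.1 v.1 w.1 p q r
        have hfR := V.isErtex.suppR u.1 v.1 w.1 p q r
        rw [Submodule.val_finsum S _ hfL, Submodule.val_finsum S _ hfR]
        exact V.isErtex.jacobi u.1 v.1 w.1 p q r }
  vac := ⟨V.vac, hvac⟩
  isVacuum :=
    { vac_minus_one := fun v => Subtype.ext (V.isVacuum.vac_minus_one v.1)
      vac_ne := fun n hn v => Subtype.ext (V.isVacuum.vac_ne n hn v.1)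
      create_minus_one := fun u => Subtype.ext (V.isVacuum.create_minus_one u.1)
      create_nonneg := fun n hn u => Subtype.ext (V.isVacuum.create_nonneg n hn u.1) }


/-- uniqueness up to canonical isomorphism of the vertex algebra `V = E ⊕ ℂ`:
if `F` is a vertex algebra with an injective `D`-ertex algebra homomorphism `j : E → F`
satisfying the same universal property, then there is a unique vertex algebra isomorphism
`α : V → F` with `α ∘ i = j`. -/
theorem stmt_13 (E : DErtexAlgebra) (F : VertexAlgebra)
    (j : E.carrier →ₗ[ℂ] F.carrier) (hj : IsMulHomFun E.mul F.mul j)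
    (hjD : ∀ v : E.carrier, j (E.D v) = F.mul (-2) (j v) F.vac)
    (hjInj : Function.Injective j)
    (hUniv : ∀ (W : VertexAlgebra) (ψ : E.carrier →ₗ[ℂ] W.carrier),
      IsMulHomFun E.mul W.mul ψ →
      (∀ v : E.carrier, ψ (E.D v) = W.mul (-2) (ψ v) W.vac) →
      ∃! φ : F.carrier →ₗ[ℂ] W.carrier,
        (IsMulHomFun F.mul W.mul φ ∧ φ F.vac = W.vac) ∧
          ∀ u : E.carrier, φ (j u) = ψ u) :
    ∃! α : (E.carrier × ℂ) →ₗ[ℂ] F.carrier,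
      (IsMulHomFun E.extMul F.mul α ∧ α E.extVac = F.vac ∧ Function.Bijective α) ∧
        ∀ u : E.carrier, α (u, 0) = j u := by
  classical
  set α : (E.carrier × ℂ) →ₗ[ℂ] F.carrier :=
    j.comp (LinearMap.fst ℂ E.carrier ℂ) + (LinearMap.snd ℂ E.carrier ℂ).smulRight F.vac
    with hαdef
  have hα : ∀ (u : E.carrier) (a : ℂ), α (u, a) = j u + a • F.vac := fun u a => rfl
  have hiter : ∀ (k : ℕ) (u : E.carrier),
      j ((⇑E.D)^[k] u) = (fun y => F.mul (-2) y F.vac)^[k] (j u) := by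
    intro k
    induction k with
    | zero => intro u; simp
    | succ k ih =>
      intro u
      rw [Function.iterate_succ_apply', Function.iterate_succ_apply', hjD, ih]
  have hcj : ∀ (n : ℤ) (u : E.carrier), j (E.cfun n u) = F.mul n (j u) F.vac := by
    intro n u
    by_cases hn : n ≤ -1
    · rw [DErtexAlgebra.cfun, if_pos hn, map_smul, hiter, VA_Dpow,
        show (-(((-n - 1).toNat : ℕ) : ℤ) - 1) = n from by omega,
        smul_smul, inv_mul_cancel₀ (by exact_mod_cast Nat.factorial_ne_zero _), one_smul]
    · rw [DErtexAlgebra.cfun, if_neg hn, map_zero]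
      exact (F.isVacuum.create_nonneg n (by omega) (j u)).symm
  have hαhom : IsMulHomFun E.extMul F.mul α := by
    intro n x y
    obtain ⟨u, a⟩ := x; obtain ⟨v, b⟩ := y
    have h1 : α (E.extMul n (u,a) (v,b))
        = j (E.mul n u v) + b • (F.mul n (j u) F.vac)
          + (if n = -1 then a • j v else 0) + (if n = -1 then a * b else 0) • F.vac := by
      simp only [DErtexAlgebra.extMul, hα, map_add, map_smul, apply_ite j, map_zero, hcj]
    have h2 : F.mul n (α (u,a)) (α (v,b))
        = F.mul n (j u) (j v) + b • (F.mul n (j u) F.vac)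
          + (if n = -1 then a • j v else 0) + (if n = -1 then a * b else 0) • F.vac := by
      rw [hα, hα]
      simp only [F.isErtex.add_left, F.isErtex.add_right, F.isErtex.smul_left,
        F.isErtex.smul_right]
      by_cases hn : n = -1
      · subst hn
        rw [F.isVacuum.vac_minus_one (j v), F.isVacuum.vac_minus_one F.vac]
        simp only [reduceIte]
        module
      · simp only [F.isVacuum.vac_ne n hn, if_neg hn, smul_zero]
        module
    rw [h1, h2, hj]
  have hαvac : α E.extVac = F.vac := by
    have h : α E.extVac = j 0 + (1:ℂ) • F.vac := rfl
    rw [h, map_zero, one_smul, zero_add]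
  have hαi : ∀ u : E.carrier, α (u, 0) = j u := by
    intro u; rw [hα, zero_smul, add_zero]
  have hψ0m : IsMulHomFun E.mul trivVA.mul (0 : E.carrier →ₗ[ℂ] trivVA.carrier) := by
    intro n u v
    show (0:ℂ) = if n = -1 then (0:ℂ) * 0 else 0
    split <;> simp
  have hψ0D : ∀ v : E.carrier, (0 : E.carrier →ₗ[ℂ] trivVA.carrier) (E.D v)
      = trivVA.mul (-2) ((0 : E.carrier →ₗ[ℂ] trivVA.carrier) v) trivVA.vac := by
    intro v
    show (0:ℂ) = if (-2:ℤ) = -1 then (0:ℂ) * 1 else 0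
    norm_num
  obtain ⟨φ0, ⟨⟨hφ0m, hφ0v⟩, hφ0j⟩, -⟩ := hUniv trivVA 0 hψ0m hψ0D
  have hker : ∀ z : E.carrier × ℂ, α z = 0 → z = 0 := by
    intro z hz
    obtain ⟨u, a⟩ := z
    have h0 : φ0 (α (u,a)) = a := by
      rw [hα, map_add, map_smul, hφ0j, hφ0v]
      show 0 + a • (1:ℂ) = a
      simp
    rw [hz, map_zero] at h0
    have ha : a = 0 := h0.symm
    subst ha
    rw [hαi] at hz
    have hu : u = 0 := hjInj (by rw [hz, map_zero])
    rw [hu]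
    rfl
  have hαinj : Function.Injective α := by
    intro z1 z2 hz
    have h := hker (z1 - z2) (by rw [map_sub, hz, sub_self])
    exact sub_eq_zero.mp h
  have hSm : ∀ (n : ℤ) (x y : F.carrier),
      x ∈ LinearMap.range α → y ∈ LinearMap.range α → F.mul n x y ∈ LinearMap.range α := by
    rintro n x y ⟨z, rfl⟩ ⟨z', rfl⟩
    exact ⟨E.extMul n z z', hαhom n z z'⟩
  have hSv : F.vac ∈ LinearMap.range α := ⟨E.extVac, hαvac⟩
  set W := SubVA F (LinearMap.range α) hSm hSv with hWdef
  set ψS : E.carrier →ₗ[ℂ] W.carrier :=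
    j.codRestrict (LinearMap.range α) (fun u => ⟨(u,0), hαi u⟩) with hψSdef
  have hψSm : IsMulHomFun E.mul W.mul ψS := fun n u v => Subtype.ext (hj n u v)
  have hψSD : ∀ v : E.carrier, ψS (E.D v) = W.mul (-2) (ψS v) W.vac :=
    fun v => Subtype.ext (hjD v)
  obtain ⟨φ, ⟨⟨hφm, hφv⟩, hφj⟩, -⟩ := hUniv W ψS hψSm hψSD
  obtain ⟨φF, -, huniqF⟩ := hUniv F j hj hjD
  have hid : (LinearMap.id : F.carrier →ₗ[ℂ] F.carrier) = φF :=
    huniqF _ ⟨⟨fun n u v => rfl, rfl⟩, fun u => rfl⟩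
  have hcomp : (LinearMap.range α).subtype.comp φ = φF := by
    apply huniqF
    refine ⟨⟨fun n x y => ?_, ?_⟩, fun u => ?_⟩
    · show (LinearMap.range α).subtype (φ (F.mul n x y))
          = F.mul n ((LinearMap.range α).subtype (φ x)) ((LinearMap.range α).subtype (φ y))
      rw [hφm n x y]
      rfl
    · show (LinearMap.range α).subtype (φ F.vac) = F.vac
      rw [hφv]
      rfl
    · show (LinearMap.range α).subtype (φ (j u)) = j u
      rw [hφj u]
      rfl
  have hαsurj : Function.Surjective α := by
    intro x
    have h : (LinearMap.range α).subtype.comp φ = LinearMap.id := hcomp.trans hid.symm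
    have hx : (LinearMap.range α).subtype (φ x) = x := by
      exact DFunLike.congr_fun h x
    have hmem : x ∈ LinearMap.range α := by
      rw [← hx]
      exact Submodule.coe_mem (φ x)
    exact LinearMap.mem_range.mp hmem
  refine ⟨α, ⟨⟨hαhom, hαvac, hαinj, hαsurj⟩, hαi⟩, ?_⟩
  intro α' hα'
  obtain ⟨⟨hm', hv', -⟩, hi'⟩ := hα'
  apply LinearMap.ext
  intro z
  obtain ⟨u, a⟩ := z
  have hsplit : ((u, a) : E.carrier × ℂ) = (u, (0:ℂ)) + a • ((0:E.carrier), (1:ℂ)) := by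
    simp [Prod.ext_iff]
  have hv'' : α' ((0:E.carrier), (1:ℂ)) = F.vac := hv'
  have hαvac' : α ((0:E.carrier), (1:ℂ)) = F.vac := hαvac
  rw [hsplit]
  simp only [map_add, map_smul]
  rw [hi', hαi, hv'', hαvac']


end
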